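/- Let (B,L) be a Hadamard pair, Λ_0 ⊂ Π(B) a spectrum of some Borel probability measure μ_0 on ℝ^d with SΛ_0 ⊂ Λ_0. Then Λ := ∩_{n≥0} SⁿΛ_0 is an orthogonal set in L²(μ_B), i.e. ∫ e^{2πi(λ_1-λ_2)·x} dμ_B(x) = 0 for distinct λ_1, λ_2 ∈ Λ, where μ_B is the invariant measure of the IFS (τ_b)_{b∈B}. -/

import Mathlib

open MeasureTheory Complex Finset Matrix
open scoped ENNReal NNReal

noncomputable def tauMap {d : ℕ} (Rr : Matrix (Fin d) (Fin d) ℝ) (b : Fin d → ℤ)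
    (x : Fin d → ℝ) : Fin d → ℝ :=
  Rr⁻¹.mulVec (x + fun i => (b i : ℝ))

noncomputable def measOp {d : ℕ} (Rr : Matrix (Fin d) (Fin d) ℝ) (B : Finset (Fin d → ℤ))
    (μ : Measure (Fin d → ℝ)) : Measure (Fin d → ℝ) :=
  (B.card : ℝ≥0∞)⁻¹ • ∑ b ∈ B, Measure.map (tauMap Rr b) μ

noncomputable def fourierTf {d : ℕ} (μ : Measure (Fin d → ℝ)) (x : Fin d → ℝ) : ℂ :=
  ∫ t, Complex.exp (2 * Real.pi * Complex.I * ((∑ i, x i * t i : ℝ) : ℂ)) ∂μ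

noncomputable def expFn {d : ℕ} (l : Fin d → ℝ) (x : Fin d → ℝ) : ℂ :=
  Complex.exp (2 * Real.pi * Complex.I * ((∑ i, l i * x i : ℝ) : ℂ))

/-- `Λ` is a spectrum for `μ`: the exponentials `e_λ`, `λ ∈ Λ`, form an orthonormal
basis of `L²(μ)`, expressed as orthonormality together with completeness. -/
def IsSpectral {d : ℕ} (μ : Measure (Fin d → ℝ)) (Λ : Set (Fin d → ℝ)) : Prop :=
  (∀ l1 ∈ Λ, ∀ l2 ∈ Λ, l1 ≠ l2 →
      ∫ x, expFn l1 x * (starRingEnd ℂ) (expFn l2 x) ∂μ = 0) ∧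
  (∀ f : (Fin d → ℝ) → ℂ, MemLp f 2 μ →
      (∀ l ∈ Λ, ∫ x, f x * (starRingEnd ℂ) (expFn l x) ∂μ = 0) → f =ᵐ[μ] 0)

noncomputable def hadamardMatrix {d : ℕ} (R : Matrix (Fin d) (Fin d) ℤ)
    (B L : Finset (Fin d → ℤ)) : Matrix {b // b ∈ B} {l // l ∈ L} ℂ :=
  fun b l => (Real.sqrt B.card : ℂ)⁻¹ * Complex.exp (2 * Real.pi * Complex.I *
    ((∑ i, ((R.map ((↑) : ℤ → ℝ))⁻¹.mulVec (fun j => ((b : Fin d → ℤ) j : ℝ))) i *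
      ((l : Fin d → ℤ) i : ℝ) : ℝ) : ℂ))

def IsHadamardPair {d : ℕ} (R : Matrix (Fin d) (Fin d) ℤ)
    (B L : Finset (Fin d → ℤ)) : Prop :=
  (hadamardMatrix R B L)ᴴ * hadamardMatrix R B L = 1 ∧
  hadamardMatrix R B L * (hadamardMatrix R B L)ᴴ = 1

def PiSet {d : ℕ} (B : Finset (Fin d → ℤ)) : Set (Fin d → ℝ) :=
  {γ | ∀ b ∈ B, ∃ m : ℤ, (∑ i, γ i * (b i : ℝ)) = (m : ℝ)}

/-- `SΛ = ∪_{l∈L} (R^T Λ + l)`. -/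
def specOp {d : ℕ} (R : Matrix (Fin d) (Fin d) ℤ) (L : Finset (Fin d → ℤ))
    (Λ : Set (Fin d → ℝ)) : Set (Fin d → ℝ) :=
  ⋃ l ∈ L, (fun γ => ((R.map ((↑) : ℤ → ℝ))ᵀ).mulVec γ + fun i => (l i : ℝ)) '' Λ



open Filter
open scoped Topology

set_option maxHeartbeats 1000000


section MatPow
attribute [local instance] Matrix.linftyOpNormedRing Matrix.linftyOpNormedAlgebra

variable {d : ℕ}

lemma detmap (M : Matrix (Fin d) (Fin d) ℝ) :
    (M.map (⇑Complex.ofRealHom)).det = Complex.ofRealHom M.det := by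
  rw [RingHom.map_det Complex.ofRealHom M, RingHom.mapMatrix_apply]

lemma det_RR_ne_zero (R : Matrix (Fin d) (Fin d) ℤ)
    (hRexp : ∀ z ∈ spectrum ℂ (R.map ((↑) : ℤ → ℂ)), 1 < ‖z‖) :
    (R.map ((↑) : ℤ → ℝ)).det ≠ 0 := by
  have hmap : R.map ((↑) : ℤ → ℂ) = (R.map ((↑) : ℤ → ℝ)).map (⇑Complex.ofRealHom) := by
    ext i j; simp [Matrix.map_apply]
  intro h
  have hdetC : (R.map ((↑) : ℤ → ℂ)).det = 0 := by
    rw [hmap, detmap, h]; simp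
  have hnu : ¬ IsUnit (R.map ((↑) : ℤ → ℂ)) := by
    rw [Matrix.isUnit_iff_isUnit_det, hdetC]
    simp
  have := hRexp 0 ((spectrum.zero_mem_iff ℂ).mpr hnu)
  norm_num at this

-- spectrum of inverse lies in unit ball : abstract version
lemma spec_inv_lt {A : Type*} [Ring A] [Algebra ℂ A] (u : Aˣ)
    (h : ∀ z ∈ spectrum ℂ (u : A), 1 < ‖z‖) :
    ∀ z ∈ spectrum ℂ ((u⁻¹ : Aˣ) : A), ‖z‖ < 1 := by
  intro z hz
  have hzne : z ≠ 0 := spectrum.ne_zero_of_mem_of_unit hz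
  have h2 : (((Units.mk0 z hzne)⁻¹ : ℂˣ) : ℂ) ∈ spectrum ℂ (((u⁻¹)⁻¹ : Aˣ) : A) :=
    spectrum.inv_mem_iff.mp hz
  rw [inv_inv] at h2
  have habs : 1 < ‖z‖⁻¹ := by
    simpa [norm_inv] using h _ h2
  have hz0 : 0 < ‖z‖ := by
    simpa using hzne
  exact (one_lt_inv_iff₀.mp habs).2

lemma nnnorm_entry_le_linfty {n : Type*} [Fintype n] [DecidableEq n] (M : Matrix n n ℂ) (i j : n) :
    ‖M i j‖₊ ≤ ‖M‖₊ := by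
  rw [Matrix.linfty_opNNNorm_def]
  refine le_trans ?_ (Finset.le_sup (Finset.mem_univ i))
  exact Finset.single_le_sum (f := fun j' => ‖M i j'‖₊) (fun _ _ => zero_le) (Finset.mem_univ j)

lemma matpow_entry_tendsto (hd : 0 < d) (R : Matrix (Fin d) (Fin d) ℤ)
    (hRexp : ∀ z ∈ spectrum ℂ (R.map ((↑) : ℤ → ℂ)), 1 < ‖z‖) (i j : Fin d) :
    Tendsto (fun n => ((R.map ((↑) : ℤ → ℝ))⁻¹ ^ n) i j) atTop (𝓝 0) := by
  haveI : Nonempty (Fin d) := ⟨⟨0, hd⟩⟩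
  haveI : CompleteSpace (Matrix (Fin d) (Fin d) ℂ) := FiniteDimensional.complete ℂ _
  set Rr := R.map ((↑) : ℤ → ℝ) with hRr
  set Rc := R.map ((↑) : ℤ → ℂ) with hRc
  have hmap : Rc = Rr.map (⇑Complex.ofRealHom) := by
    ext i j; simp [Matrix.map_apply, hRr, hRc]
  have hdet : Rr.det ≠ 0 := det_RR_ne_zero R hRexp
  have hdetC : Rc.det ≠ 0 := by
    rw [hmap, detmap]
    simpa using hdet
  have huC : IsUnit Rc := (Matrix.isUnit_iff_isUnit_det _).mpr (isUnit_iff_ne_zero.mpr hdetC)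
  have hinvmap : Rc⁻¹ = Rr⁻¹.map (⇑Complex.ofRealHom) := by
    apply Matrix.inv_eq_right_inv
    rw [hmap, ← Matrix.map_mul, Matrix.mul_nonsing_inv _ (isUnit_iff_ne_zero.mpr hdet)]
    simp
  have hpowmap : ∀ n : ℕ, (Rc⁻¹) ^ n = (Rr⁻¹ ^ n).map (⇑Complex.ofRealHom) := by
    intro n
    rw [hinvmap]
    induction n with
    | zero => simp
    | succ k ih => rw [pow_succ, pow_succ, ih, Matrix.map_mul]
  have hcinv : ((huC.unit⁻¹ : _ˣ) : Matrix (Fin d) (Fin d) ℂ) = Rc⁻¹ := by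
    rw [Matrix.coe_units_inv, huC.unit_spec]
  have hspec : ∀ z ∈ spectrum ℂ (Rc⁻¹), ‖z‖ < 1 := by
    rw [← hcinv]
    exact spec_inv_lt huC.unit (by rw [huC.unit_spec]; exact hRexp)
  -- spectral radius < 1
  obtain ⟨z₀, hz₀mem, hz₀eq⟩ := spectrum.exists_nnnorm_eq_spectralRadius (Rc⁻¹)
  have hrad : spectralRadius ℂ (Rc⁻¹) < 1 := by
    rw [← hz₀eq]
    have := hspec z₀ hz₀mem
    exact_mod_cast ENNReal.coe_lt_one_iff.mpr (by exact_mod_cast this)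
  obtain ⟨c, hc1, hc2⟩ := ENNReal.lt_iff_exists_nnreal_btwn.mp hrad
  have hclt1 : c < 1 := by exact_mod_cast hc2
  have hgel := spectrum.pow_nnnorm_pow_one_div_tendsto_nhds_spectralRadius (Rc⁻¹)
  have hev : ∀ᶠ n : ℕ in atTop, (‖(Rc⁻¹) ^ n‖₊ : ℝ≥0∞) ^ (1 / (n:ℝ)) < (c : ℝ≥0∞) :=
    hgel.eventually_lt_const hc1
  have hbound : ∀ᶠ n : ℕ in atTop, ‖(Rc⁻¹) ^ n‖ ≤ (c:ℝ) ^ n := by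
    filter_upwards [hev, eventually_ge_atTop 1] with n hn hn1
    have hne : (n:ℝ) ≠ 0 := by positivity
    have h1 : (‖(Rc⁻¹) ^ n‖₊ : ℝ≥0∞) ≤ (c:ℝ≥0∞) ^ n := by
      calc (‖(Rc⁻¹) ^ n‖₊ : ℝ≥0∞)
          = ((‖(Rc⁻¹) ^ n‖₊ : ℝ≥0∞) ^ (1/(n:ℝ))) ^ (n:ℕ) := by
            rw [← ENNReal.rpow_natCast (((‖(Rc⁻¹) ^ n‖₊ : ℝ≥0∞)) ^ (1/(n:ℝ))) n,
              ← ENNReal.rpow_mul, one_div, inv_mul_cancel₀ hne, ENNReal.rpow_one]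
        _ ≤ (c:ℝ≥0∞) ^ n := pow_le_pow_left' hn.le n
    have h2 : ‖(Rc⁻¹) ^ n‖₊ ≤ c ^ n := by
      rw [← ENNReal.coe_pow] at h1
      exact_mod_cast h1
    calc ‖(Rc⁻¹) ^ n‖ = ((‖(Rc⁻¹) ^ n‖₊ : ℝ≥0) : ℝ) := rfl
      _ ≤ ((c ^ n : ℝ≥0) : ℝ) := by exact_mod_cast h2
      _ = (c:ℝ) ^ n := by push_cast; ring
  have habs : ∀ᶠ n : ℕ in atTop, |(Rr⁻¹ ^ n) i j| ≤ (c:ℝ) ^ n := by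
    filter_upwards [hbound] with n hn
    have : ‖(Rc⁻¹ ^ n) i j‖ ≤ ‖(Rc⁻¹) ^ n‖ := by
      have := nnnorm_entry_le_linfty ((Rc⁻¹) ^ n) i j
      exact_mod_cast this
    have h3 : |(Rr⁻¹ ^ n) i j| = ‖(Rc⁻¹ ^ n) i j‖ := by
      rw [hpowmap n]; simp [Matrix.map_apply]
    rw [h3]; exact this.trans hn
  rw [tendsto_zero_iff_abs_tendsto_zero]
  apply squeeze_zero' (Eventually.of_forall fun n => abs_nonneg _) habs
  exact tendsto_pow_atTop_nhds_zero_of_lt_one c.coe_nonneg (by exact_mod_cast hclt1)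

end MatPow

section Base
variable {d : ℕ}

lemma continuous_tauMap (Rr : Matrix (Fin d) (Fin d) ℝ) (b : Fin d → ℤ) :
    Continuous (tauMap Rr b) := by
  unfold tauMap
  exact Continuous.matrix_mulVec continuous_const (by fun_prop)

lemma tauMap_sub (Rr : Matrix (Fin d) (Fin d) ℝ) (b : Fin d → ℤ) (x y : Fin d → ℝ) :
    tauMap Rr b x - tauMap Rr b y = Rr⁻¹.mulVec (x - y) := by
  unfold tauMap
  rw [← Matrix.mulVec_sub]
  congr 1
  abel

lemma norm_expFn (l x : Fin d → ℝ) : ‖expFn l x‖ = 1 := by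
  unfold expFn
  rw [Complex.norm_exp]
  norm_num

lemma continuous_expFn (l : Fin d → ℝ) : Continuous (expFn l) := by
  unfold expFn; fun_prop

lemma expFn_eq_exp_dot (l x : Fin d → ℝ) :
    expFn l x = Complex.exp (2 * Real.pi * Complex.I * ((l ⬝ᵥ x : ℝ) : ℂ)) := rfl

lemma integrable_of_bdd {f : (Fin d → ℝ) → ℂ} {μ : Measure (Fin d → ℝ)} [IsFiniteMeasure μ]
    (hf : Continuous f) {C : ℝ} (hb : ∀ x, ‖f x‖ ≤ C) : Integrable f μ :=
  ⟨hf.aestronglyMeasurable, HasFiniteIntegral.of_bounded (C := C) (ae_of_all _ hb)⟩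

lemma integrable_of_bdd' {α : Type*} [MeasurableSpace α] [TopologicalSpace α] [BorelSpace α]
    {f : α → ℂ} {μ : Measure α} [IsFiniteMeasure μ]
    (hf : Continuous f) {C : ℝ} (hb : ∀ x, ‖f x‖ ≤ C) : Integrable f μ :=
  ⟨hf.aestronglyMeasurable, HasFiniteIntegral.of_bounded (C := C) (ae_of_all _ hb)⟩

lemma integrable_expFn (l : Fin d → ℝ) (μ : Measure (Fin d → ℝ)) [IsFiniteMeasure μ] :
    Integrable (expFn l) μ :=
  integrable_of_bdd (continuous_expFn l) (C := 1) (fun x => le_of_eq (norm_expFn l x))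

lemma isProb_measOp (Rr : Matrix (Fin d) (Fin d) ℝ) (B : Finset (Fin d → ℤ))
    (hB : B.Nonempty) (μ : Measure (Fin d → ℝ)) [IsProbabilityMeasure μ] :
    IsProbabilityMeasure (measOp Rr B μ) := by
  constructor
  unfold measOp
  rw [Measure.smul_apply, Measure.finset_sum_apply]
  have : ∀ b ∈ B, (Measure.map (tauMap Rr b) μ) Set.univ = 1 := by
    intro b _
    haveI : IsProbabilityMeasure (Measure.map (tauMap Rr b) μ) :=
      Measure.isProbabilityMeasure_map (continuous_tauMap Rr b).measurable.aemeasurable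
    exact measure_univ
  rw [Finset.sum_congr rfl this, Finset.sum_const, nsmul_eq_mul, mul_one, smul_eq_mul]
  exact ENNReal.inv_mul_cancel (by exact_mod_cast Finset.card_ne_zero.mpr hB)
    (ENNReal.natCast_ne_top _)

lemma integral_measOp (Rr : Matrix (Fin d) (Fin d) ℝ) (B : Finset (Fin d → ℤ))
    {f : (Fin d → ℝ) → ℂ} (hf : Continuous f) {C : ℝ} (hb : ∀ x, ‖f x‖ ≤ C)
    (μ : Measure (Fin d → ℝ)) [IsFiniteMeasure μ] :
    ∫ x, f x ∂(measOp Rr B μ) = (B.card : ℂ)⁻¹ * ∑ b ∈ B, ∫ x, f (tauMap Rr b x) ∂μ := by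
  unfold measOp
  rw [integral_smul_measure]
  have hint : ∀ b ∈ B, Integrable f (Measure.map (tauMap Rr b) μ) := by
    intro b _
    refine (integrable_map_measure hf.aestronglyMeasurable
      (continuous_tauMap Rr b).measurable.aemeasurable).mpr ?_
    exact integrable_of_bdd (hf.comp (continuous_tauMap Rr b)) (fun x => hb _)
  rw [integral_finset_sum_measure hint]
  have : ∀ b ∈ B, ∫ x, f x ∂(Measure.map (tauMap Rr b) μ) = ∫ x, f (tauMap Rr b x) ∂μ := by
    intro b _
    exact integral_map (continuous_tauMap Rr b).measurable.aemeasurable hf.aestronglyMeasurable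
  rw [Finset.sum_congr rfl this]
  simp only [ENNReal.toReal_inv, ENNReal.toReal_natCast]
  rw [← Complex.ofReal_natCast]
  rw [Complex.real_smul]
  push_cast
  ring

end Base

section ExpAlg
variable {d : ℕ}

lemma expFn_mul_conj (a b x : Fin d → ℝ) :
    expFn a x * (starRingEnd ℂ) (expFn b x) = expFn (a - b) x := by
  have h1 : (starRingEnd ℂ) (expFn b x)
      = Complex.exp (-(2 * Real.pi * Complex.I * ((∑ i, b i * x i : ℝ) : ℂ))) := by
    unfold expFn
    rw [← Complex.exp_conj]
    congr 1
    simp only [_root_.map_mul, Complex.conj_I, Complex.conj_ofReal, _root_.map_ofNat]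
    ring
  rw [h1]
  unfold expFn
  rw [← Complex.exp_add]
  congr 1
  have hs : (∑ i, (a - b) i * x i : ℝ) = (∑ i, a i * x i : ℝ) - (∑ i, b i * x i : ℝ) := by
    rw [← Finset.sum_sub_distrib]
    congr 1; ext i; simp [sub_mul]
  rw [hs]
  push_cast
  ring

lemma exp_two_pi_int_add (m : ℤ) (t : ℝ) :
    Complex.exp (2 * Real.pi * Complex.I * (((m : ℝ) + t : ℝ) : ℂ))
      = Complex.exp (2 * Real.pi * Complex.I * (t : ℂ)) := by
  push_cast
  rw [mul_add, Complex.exp_add]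
  have : Complex.exp (2 * Real.pi * Complex.I * (m : ℂ)) = 1 := by
    have := Complex.exp_int_mul_two_pi_mul_I m
    rw [← this]
    congr 1
    push_cast
    ring
  rw [this, one_mul]

lemma expFn_tauMap (Rr : Matrix (Fin d) (Fin d) ℝ) (b : Fin d → ℤ) (δ x : Fin d → ℝ) :
    expFn δ (tauMap Rr b x)
      = Complex.exp (2 * Real.pi * Complex.I
          * (((Rr⁻¹.mulVec fun i => (b i : ℝ)) ⬝ᵥ δ : ℝ) : ℂ))
        * expFn (Rr⁻¹ᵀ.mulVec δ) x := by
  unfold expFn tauMap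
  rw [← Complex.exp_add]
  congr 1
  have h1 : (∑ i, δ i * (Rr⁻¹.mulVec (x + fun i => (b i : ℝ))) i : ℝ)
      = δ ⬝ᵥ (Rr⁻¹.mulVec x) + δ ⬝ᵥ (Rr⁻¹.mulVec fun i => (b i : ℝ)) := by
    rw [← dotProduct_add, ← Matrix.mulVec_add]
    rfl
  have h2 : (∑ i, (Rr⁻¹ᵀ.mulVec δ) i * x i : ℝ) = δ ⬝ᵥ (Rr⁻¹.mulVec x) := by
    rw [Matrix.dotProduct_mulVec, ← Matrix.mulVec_transpose]
    rfl
  rw [h1, h2, dotProduct_comm ((Rr⁻¹).mulVec fun i => (b i : ℝ)) δ]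
  push_cast
  ring

end ExpAlg

section Orth
variable {d : ℕ}

lemma integral_expFn_measOp (Rr : Matrix (Fin d) (Fin d) ℝ) (B : Finset (Fin d → ℤ))
    (δ : Fin d → ℝ) (ν : Measure (Fin d → ℝ)) [IsFiniteMeasure ν] :
    ∫ x, expFn δ x ∂(measOp Rr B ν)
      = ((B.card : ℂ)⁻¹ * ∑ b ∈ B, Complex.exp (2 * Real.pi * Complex.I
          * (((Rr⁻¹.mulVec fun i => (b i : ℝ)) ⬝ᵥ δ : ℝ) : ℂ)))
        * ∫ x, expFn (Rr⁻¹ᵀ.mulVec δ) x ∂ν := by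
  rw [integral_measOp Rr B (continuous_expFn δ) (fun x => le_of_eq (norm_expFn δ x)) ν]
  have : ∀ b ∈ B, ∫ x, expFn δ (tauMap Rr b x) ∂ν
      = Complex.exp (2 * Real.pi * Complex.I
          * (((Rr⁻¹.mulVec fun i => (b i : ℝ)) ⬝ᵥ δ : ℝ) : ℂ))
            * ∫ x, expFn (Rr⁻¹ᵀ.mulVec δ) x ∂ν := by
    intro b _
    rw [← integral_const_mul]
    congr 1
    ext x
    exact expFn_tauMap Rr b δ x
  rw [Finset.sum_congr rfl this, ← Finset.sum_mul]
  ring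

lemma hadamard_sum_eq_zero {N : ℕ} (R : Matrix (Fin d) (Fin d) ℤ)
    (B L : Finset (Fin d → ℤ)) (hBcard : B.card = N) (hN : 2 ≤ N)
    (hH : IsHadamardPair R B L) {l1 l2 : Fin d → ℤ} (hl1 : l1 ∈ L) (hl2 : l2 ∈ L)
    (hne : l1 ≠ l2) :
    ∑ b ∈ B, Complex.exp (2 * Real.pi * Complex.I *
      ((((R.map ((↑) : ℤ → ℝ))⁻¹.mulVec fun i => (b i : ℝ))
          ⬝ᵥ fun i => ((l1 i : ℝ) - (l2 i : ℝ)) : ℝ) : ℂ)) = 0 := by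
  have hentry := congrArg (fun M => M ⟨l2, hl2⟩ ⟨l1, hl1⟩) hH.1
  simp only [Matrix.mul_apply, Matrix.conjTranspose_apply, Matrix.one_apply] at hentry
  rw [if_neg (by simp [Subtype.ext_iff]; exact fun h => (hne h.symm).elim)] at hentry
  -- rewrite each summand
  have hsq : ((Real.sqrt B.card : ℂ))⁻¹ * ((Real.sqrt B.card : ℂ))⁻¹ = (B.card : ℂ)⁻¹ := by
    have h : (Real.sqrt B.card) * (Real.sqrt B.card) = (B.card : ℝ) :=
      Real.mul_self_sqrt (by positivity)
    rw [← mul_inv, ← Complex.ofReal_mul, h, Complex.ofReal_natCast]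
  have key : ∀ b : {b // b ∈ B}, (starRingEnd ℂ) (hadamardMatrix R B L b ⟨l2, hl2⟩)
      * hadamardMatrix R B L b ⟨l1, hl1⟩
      = (B.card : ℂ)⁻¹ * Complex.exp (2 * Real.pi * Complex.I *
        ((((R.map ((↑) : ℤ → ℝ))⁻¹.mulVec fun i => ((b : Fin d → ℤ) i : ℝ))
            ⬝ᵥ fun i => ((l1 i : ℝ) - (l2 i : ℝ)) : ℝ) : ℂ)) := by
    intro b
    unfold hadamardMatrix
    rw [_root_.map_mul, ← Complex.exp_conj]
    simp only [_root_.map_mul, Complex.conj_I, Complex.conj_ofReal, _root_.map_ofNat,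
      map_inv₀]
    rw [mul_mul_mul_comm, hsq, ← Complex.exp_add]
    congr 2
    have : ((R.map ((↑) : ℤ → ℝ))⁻¹.mulVec fun i => ((b : Fin d → ℤ) i : ℝ))
        ⬝ᵥ (fun i => ((l1 i : ℝ) - (l2 i : ℝ)))
        = (∑ i, ((R.map ((↑) : ℤ → ℝ))⁻¹.mulVec fun j => ((b : Fin d → ℤ) j : ℝ)) i * (l1 i : ℝ))
        - (∑ i, ((R.map ((↑) : ℤ → ℝ))⁻¹.mulVec fun j => ((b : Fin d → ℤ) j : ℝ)) i * (l2 i : ℝ)) := by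
      simp only [dotProduct, ← Finset.sum_sub_distrib]
      apply Finset.sum_congr rfl
      intro i _
      ring
    rw [this]
    push_cast
    ring
  rw [Finset.sum_congr rfl (fun b _ => rfl)]
  -- turn the Finset sum into a sum over the subtype
  have hsub : ∑ b ∈ B, Complex.exp (2 * Real.pi * Complex.I *
      ((((R.map ((↑) : ℤ → ℝ))⁻¹.mulVec fun i => (b i : ℝ))
          ⬝ᵥ fun i => ((l1 i : ℝ) - (l2 i : ℝ)) : ℝ) : ℂ))
      = ∑ b : {b // b ∈ B}, Complex.exp (2 * Real.pi * Complex.I *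
      ((((R.map ((↑) : ℤ → ℝ))⁻¹.mulVec fun i => ((b : Fin d → ℤ) i : ℝ))
          ⬝ᵥ fun i => ((l1 i : ℝ) - (l2 i : ℝ)) : ℝ) : ℂ)) :=
    (Finset.sum_coe_sort B _).symm
  rw [hsub]
  have : ∑ b : {b // b ∈ B}, (starRingEnd ℂ) (hadamardMatrix R B L b ⟨l2, hl2⟩)
      * hadamardMatrix R B L b ⟨l1, hl1⟩ = 0 := by
    rw [← hentry]
    apply Finset.sum_congr rfl
    intros; rfl
  rw [Finset.sum_congr rfl (fun b _ => key b)] at this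
  rw [← Finset.mul_sum] at this
  rcases mul_eq_zero.mp this with h | h
  · exfalso
    have : (B.card : ℂ) ≠ 0 := by
      have : B.card ≠ 0 := by omega
      exact_mod_cast this
    simp [this] at h
  · exact h

end Orth

section OrthMain
variable {d : ℕ}

lemma specOp_mono (R : Matrix (Fin d) (Fin d) ℤ) (L : Finset (Fin d → ℤ))
    {Λ Λ' : Set (Fin d → ℝ)} (h : Λ ⊆ Λ') : specOp R L Λ ⊆ specOp R L Λ' := by
  unfold specOp
  exact Set.iUnion₂_mono fun l hl => Set.image_mono h

lemma iter_specOp_subset (R : Matrix (Fin d) (Fin d) ℤ) (L : Finset (Fin d → ℤ))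
    {Λ₀ : Set (Fin d → ℝ)} (hS : specOp R L Λ₀ ⊆ Λ₀) :
    ∀ n, (specOp R L)^[n] Λ₀ ⊆ Λ₀ := by
  intro n
  induction n with
  | zero => exact subset_rfl
  | succ k ih =>
    rw [Function.iterate_succ_apply']
    exact (specOp_mono R L ih).trans hS

lemma isProb_iter (Rr : Matrix (Fin d) (Fin d) ℝ) (B : Finset (Fin d → ℤ))
    (hB : B.Nonempty) (μ : Measure (Fin d → ℝ)) [IsProbabilityMeasure μ] :
    ∀ n, IsProbabilityMeasure ((measOp Rr B)^[n] μ) := by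
  intro n
  induction n with
  | zero => simpa using (inferInstance : IsProbabilityMeasure μ)
  | succ k ih =>
    rw [Function.iterate_succ_apply']
    haveI := ih
    exact isProb_measOp Rr B hB ((measOp Rr B)^[k] μ)

theorem orth_iter {N : ℕ} (R : Matrix (Fin d) (Fin d) ℤ)
    (hRexp : ∀ z ∈ spectrum ℂ (R.map ((↑) : ℤ → ℂ)), 1 < ‖z‖)
    (B L : Finset (Fin d → ℤ)) (hBcard : B.card = N) (hN : 2 ≤ N)
    (hH : IsHadamardPair R B L)
    (μ₀ : Measure (Fin d → ℝ)) [IsProbabilityMeasure μ₀]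
    (Λ₀ : Set (Fin d → ℝ)) (hΛ₀ : Λ₀ ⊆ PiSet B) (hspec : IsSpectral μ₀ Λ₀)
    (hS : specOp R L Λ₀ ⊆ Λ₀) :
    ∀ n : ℕ, ∀ l1 ∈ (specOp R L)^[n] Λ₀, ∀ l2 ∈ (specOp R L)^[n] Λ₀, l1 ≠ l2 →
      ∫ x, expFn (l1 - l2) x ∂((measOp (R.map ((↑) : ℤ → ℝ)) B)^[n] μ₀) = 0 := by
  set Rr := R.map ((↑) : ℤ → ℝ) with hRr
  have hBne : B.Nonempty := Finset.card_pos.mp (by omega)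
  have hRdet : Rr.det ≠ 0 := det_RR_ne_zero R hRexp
  have hRu := isUnit_iff_ne_zero.mpr hRdet
  intro n
  induction n with
  | zero =>
    intro l1 h1 l2 h2 hne
    have heq : ∫ x, expFn (l1 - l2) x ∂μ₀
        = ∫ x, expFn l1 x * (starRingEnd ℂ) (expFn l2 x) ∂μ₀ :=
      integral_congr_ae (Filter.Eventually.of_forall fun x => (expFn_mul_conj l1 l2 x).symm)
    simpa [heq] using hspec.1 l1 h1 l2 h2 hne
  | succ n IH =>
    intro l1 h1 l2 h2 hne
    rw [Function.iterate_succ_apply'] at h1 h2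
    rw [Function.iterate_succ_apply']
    simp only [specOp, Set.mem_iUnion, Set.mem_image] at h1 h2
    obtain ⟨t1, ht1L, γ1, hγ1, hEq1⟩ := h1
    obtain ⟨t2, ht2L, γ2, hγ2, hEq2⟩ := h2
    haveI : IsProbabilityMeasure ((measOp Rr B)^[n] μ₀) := isProb_iter Rr B hBne μ₀ n
    rw [integral_expFn_measOp Rr B (l1 - l2) ((measOp Rr B)^[n] μ₀)]
    have hl1l2 : l1 - l2 = Rrᵀ.mulVec (γ1 - γ2) + fun i => ((t1 i : ℝ) - (t2 i : ℝ)) := by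
      rw [← hEq1, ← hEq2, Matrix.mulVec_sub]
      funext i
      simp only [Pi.add_apply, Pi.sub_apply]
      ring
    by_cases hT : t1 = t2
    · have hγne : γ1 ≠ γ2 := by
        intro h
        exact hne (by rw [← hEq1, ← hEq2, hT, h])
      have h2' : Rr⁻¹ᵀ.mulVec (l1 - l2) = γ1 - γ2 := by
        have hz : (fun i : Fin d => (t2 i : ℝ) - (t2 i : ℝ)) = 0 := by funext i; simp
        rw [hl1l2, hT, hz, Matrix.mulVec_add, Matrix.mulVec_zero, add_zero,
          Matrix.mulVec_mulVec, ← Matrix.transpose_mul,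
          Matrix.mul_nonsing_inv _ hRu, Matrix.transpose_one, Matrix.one_mulVec]
      rw [h2', IH γ1 hγ1 γ2 hγ2 hγne, mul_zero]
    · have hfront : ∀ b ∈ B, Complex.exp (2 * Real.pi * Complex.I
          * (((Rr⁻¹.mulVec fun i => (b i : ℝ)) ⬝ᵥ (l1 - l2) : ℝ) : ℂ))
          = Complex.exp (2 * Real.pi * Complex.I
          * (((Rr⁻¹.mulVec fun i => (b i : ℝ)) ⬝ᵥ (fun i => ((t1 i : ℝ) - (t2 i : ℝ))) : ℝ) : ℂ)) := by
        intro b hb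
        obtain ⟨m1, hm1⟩ := hΛ₀ (iter_specOp_subset R L hS n hγ1) b hb
        obtain ⟨m2, hm2⟩ := hΛ₀ (iter_specOp_subset R L hS n hγ2) b hb
        have hdot : ((Rr⁻¹.mulVec fun i => (b i : ℝ)) ⬝ᵥ (l1 - l2) : ℝ)
            = ((m1 - m2 : ℤ) : ℝ)
              + ((Rr⁻¹.mulVec fun i => (b i : ℝ)) ⬝ᵥ (fun i => ((t1 i : ℝ) - (t2 i : ℝ))) : ℝ) := by
          rw [hl1l2, dotProduct_add]
          congr 1
          rw [Matrix.dotProduct_mulVec, Matrix.vecMul_transpose, Matrix.mulVec_mulVec,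
            Matrix.mul_nonsing_inv _ hRu, Matrix.one_mulVec, dotProduct_sub]
          have e1 : (fun i => (b i : ℝ)) ⬝ᵥ γ1 = (m1 : ℝ) := by
            rw [dotProduct_comm]; exact hm1
          have e2 : (fun i => (b i : ℝ)) ⬝ᵥ γ2 = (m2 : ℝ) := by
            rw [dotProduct_comm]; exact hm2
          rw [e1, e2]
          push_cast
          ring
        rw [hdot, exp_two_pi_int_add]
      rw [Finset.sum_congr rfl hfront,
        hadamard_sum_eq_zero R B L hBcard hN hH ht1L ht2L hT, mul_zero, zero_mul]

end OrthMain

section Conv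
variable {d : ℕ}

lemma norm_exp_two_pi_sub (s t : ℝ) :
    ‖Complex.exp (2 * Real.pi * Complex.I * (s : ℂ))
      - Complex.exp (2 * Real.pi * Complex.I * (t : ℂ))‖ ≤ 4 * Real.pi * |s - t| := by
  have key : ∀ a b : ℝ, ‖Complex.exp ((a:ℂ) * Complex.I) - Complex.exp ((b:ℂ) * Complex.I)‖
      ≤ 2 * |a - b| := by
    intro a b
    have hfac : Complex.exp ((a:ℂ) * Complex.I) - Complex.exp ((b:ℂ) * Complex.I)
        = Complex.exp ((b:ℂ) * Complex.I) * (Complex.exp (((a - b : ℝ):ℂ) * Complex.I) - 1) := by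
      rw [mul_sub, ← Complex.exp_add, mul_one]
      push_cast
      ring_nf
    rw [hfac, norm_mul, Complex.norm_exp_ofReal_mul_I, one_mul]
    have habs : ‖((a - b : ℝ):ℂ) * Complex.I‖ = |a - b| := by
      rw [norm_mul, Complex.norm_I, mul_one, Complex.norm_real, Real.norm_eq_abs]
    by_cases hle : |a - b| ≤ 1
    · have := Complex.norm_exp_sub_one_le (x := ((a - b : ℝ):ℂ) * Complex.I) (by rw [habs]; exact hle)
      calc ‖Complex.exp (((a - b : ℝ):ℂ) * Complex.I) - 1‖ ≤ 2 * ‖((a-b:ℝ):ℂ) * Complex.I‖ := this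
        _ = 2 * |a - b| := by rw [habs]
    · push_neg at hle
      calc ‖Complex.exp (((a - b : ℝ):ℂ) * Complex.I) - 1‖
          ≤ ‖Complex.exp (((a - b : ℝ):ℂ) * Complex.I)‖ + ‖(1:ℂ)‖ := norm_sub_le _ _
        _ = 2 := by
            rw [Complex.norm_exp_ofReal_mul_I]
            norm_num
        _ ≤ 2 * |a - b| := by nlinarith
  have h1 : (2 * Real.pi * Complex.I * (s:ℂ)) = ((2 * Real.pi * s : ℝ) : ℂ) * Complex.I := by
    push_cast; ring
  have h2 : (2 * Real.pi * Complex.I * (t:ℂ)) = ((2 * Real.pi * t : ℝ) : ℂ) * Complex.I := by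
    push_cast; ring
  rw [h1, h2]
  calc ‖Complex.exp (((2 * Real.pi * s : ℝ):ℂ) * Complex.I)
        - Complex.exp (((2 * Real.pi * t : ℝ):ℂ) * Complex.I)‖
      ≤ 2 * |2 * Real.pi * s - 2 * Real.pi * t| := key _ _
    _ = 4 * Real.pi * |s - t| := by
        rw [show 2 * Real.pi * s - 2 * Real.pi * t = (2 * Real.pi) * (s - t) by ring, abs_mul,
          _root_.abs_of_nonneg (by positivity : (0:ℝ) ≤ 2 * Real.pi)]
        ring

noncomputable def iterH (Rr : Matrix (Fin d) (Fin d) ℝ) (B : Finset (Fin d → ℤ))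
    (δ : Fin d → ℝ) : ℕ → (Fin d → ℝ) → ℂ
  | 0 => expFn δ
  | n+1 => fun x => (B.card : ℂ)⁻¹ * ∑ b ∈ B, iterH Rr B δ n (tauMap Rr b x)

lemma continuous_iterH (Rr : Matrix (Fin d) (Fin d) ℝ) (B : Finset (Fin d → ℤ))
    (δ : Fin d → ℝ) : ∀ n, Continuous (iterH Rr B δ n)
  | 0 => continuous_expFn δ
  | (n+1) => by
    show Continuous fun x => (B.card : ℂ)⁻¹ * ∑ b ∈ B, iterH Rr B δ n (tauMap Rr b x)
    exact continuous_const.mul (continuous_finset_sum _ fun b _ =>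
      (continuous_iterH Rr B δ n).comp (continuous_tauMap Rr b))

lemma norm_iterH_le (Rr : Matrix (Fin d) (Fin d) ℝ) (B : Finset (Fin d → ℤ))
    (hB : B.Nonempty) (δ : Fin d → ℝ) : ∀ n x, ‖iterH Rr B δ n x‖ ≤ 1 := by
  intro n
  induction n with
  | zero => intro x; exact le_of_eq (norm_expFn δ x)
  | succ k ih =>
    intro x
    show ‖(B.card : ℂ)⁻¹ * ∑ b ∈ B, iterH Rr B δ k (tauMap Rr b x)‖ ≤ 1
    rw [norm_mul]
    have h1 : ‖∑ b ∈ B, iterH Rr B δ k (tauMap Rr b x)‖ ≤ (B.card : ℝ) := by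
      calc ‖∑ b ∈ B, iterH Rr B δ k (tauMap Rr b x)‖
          ≤ ∑ b ∈ B, ‖iterH Rr B δ k (tauMap Rr b x)‖ := norm_sum_le _ _
        _ ≤ ∑ _b ∈ B, 1 := Finset.sum_le_sum fun b _ => ih _
        _ = (B.card : ℝ) := by simp
    have h2 : ‖((B.card : ℂ))⁻¹‖ = ((B.card : ℝ))⁻¹ := by
      rw [norm_inv]
      simp
    rw [h2]
    have hc : (0:ℝ) < (B.card : ℝ) := by
      have := Finset.card_pos.mpr hB
      exact_mod_cast this
    calc ((B.card : ℝ))⁻¹ * ‖∑ b ∈ B, iterH Rr B δ k (tauMap Rr b x)‖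
        ≤ ((B.card : ℝ))⁻¹ * (B.card : ℝ) := by
          apply mul_le_mul_of_nonneg_left h1 (by positivity)
      _ = 1 := inv_mul_cancel₀ (ne_of_gt hc)

lemma integral_iterH (Rr : Matrix (Fin d) (Fin d) ℝ) (B : Finset (Fin d → ℤ))
    (hB : B.Nonempty) (δ : Fin d → ℝ) :
    ∀ n (μ : Measure (Fin d → ℝ)), IsProbabilityMeasure μ →
      ∫ x, expFn δ x ∂((measOp Rr B)^[n] μ) = ∫ x, iterH Rr B δ n x ∂μ := by
  intro n
  induction n with
  | zero => intro μ _; rfl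
  | succ k ih =>
    intro μ hμ
    haveI := hμ
    haveI : IsProbabilityMeasure (measOp Rr B μ) := isProb_measOp Rr B hB μ
    rw [Function.iterate_succ_apply, ih (measOp Rr B μ) inferInstance]
    rw [integral_measOp Rr B (continuous_iterH Rr B δ k) (norm_iterH_le Rr B hB δ k) μ]
    show _ = ∫ x, (B.card : ℂ)⁻¹ * ∑ b ∈ B, iterH Rr B δ k (tauMap Rr b x) ∂μ
    rw [integral_const_mul]
    congr 1
    rw [integral_finset_sum]
    intro b _
    exact integrable_of_bdd ((continuous_iterH Rr B δ k).comp (continuous_tauMap Rr b))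
      (C := 1) (fun x => norm_iterH_le Rr B hB δ k _)

lemma iterH_diff_le (Rr : Matrix (Fin d) (Fin d) ℝ) (B : Finset (Fin d → ℤ))
    (hB : B.Nonempty) (δ : Fin d → ℝ) :
    ∀ n x y, ‖iterH Rr B δ n x - iterH Rr B δ n y‖
      ≤ 4 * Real.pi * |δ ⬝ᵥ ((Rr⁻¹ ^ n).mulVec (x - y))| := by
  intro n
  induction n with
  | zero =>
    intro x y
    show ‖expFn δ x - expFn δ y‖ ≤ _
    unfold expFn
    have h := norm_exp_two_pi_sub (∑ i, δ i * x i) (∑ i, δ i * y i)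
    refine h.trans (le_of_eq ?_)
    congr 1
    rw [pow_zero, Matrix.one_mulVec]
    have : (∑ i, δ i * x i) - (∑ i, δ i * y i) = δ ⬝ᵥ (x - y) := by
      rw [← Finset.sum_sub_distrib]
      apply Finset.sum_congr rfl
      intro i _
      simp [Pi.sub_apply]
      ring
    rw [this]
  | succ k ih =>
    intro x y
    show ‖(B.card : ℂ)⁻¹ * ∑ b ∈ B, iterH Rr B δ k (tauMap Rr b x)
        - (B.card : ℂ)⁻¹ * ∑ b ∈ B, iterH Rr B δ k (tauMap Rr b y)‖ ≤ _
    rw [← mul_sub, ← Finset.sum_sub_distrib, norm_mul]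
    have h2 : ‖((B.card : ℂ))⁻¹‖ = ((B.card : ℝ))⁻¹ := by rw [norm_inv]; simp
    rw [h2]
    have hc : (0:ℝ) < (B.card : ℝ) := by
      have := Finset.card_pos.mpr hB; exact_mod_cast this
    have hbd : ∀ b ∈ B, ‖iterH Rr B δ k (tauMap Rr b x) - iterH Rr B δ k (tauMap Rr b y)‖
        ≤ 4 * Real.pi * |δ ⬝ᵥ ((Rr⁻¹ ^ (k+1)).mulVec (x - y))| := by
      intro b _
      have := ih (tauMap Rr b x) (tauMap Rr b y)
      rw [tauMap_sub] at this
      refine this.trans (le_of_eq ?_)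
      rw [Matrix.mulVec_mulVec, ← pow_succ]
    calc ((B.card : ℝ))⁻¹ * ‖∑ b ∈ B, (iterH Rr B δ k (tauMap Rr b x) - iterH Rr B δ k (tauMap Rr b y))‖
        ≤ ((B.card : ℝ))⁻¹ * ∑ b ∈ B, ‖iterH Rr B δ k (tauMap Rr b x) - iterH Rr B δ k (tauMap Rr b y)‖ :=
          mul_le_mul_of_nonneg_left (norm_sum_le _ _) (by positivity)
      _ ≤ ((B.card : ℝ))⁻¹ * ∑ _b ∈ B, 4 * Real.pi * |δ ⬝ᵥ ((Rr⁻¹ ^ (k+1)).mulVec (x - y))| :=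
          mul_le_mul_of_nonneg_left (Finset.sum_le_sum hbd) (by positivity)
      _ = 4 * Real.pi * |δ ⬝ᵥ ((Rr⁻¹ ^ (k+1)).mulVec (x - y))| := by
          rw [Finset.sum_const, nsmul_eq_mul]
          field_simp

end Conv

section Final
variable {d : ℕ}

lemma dot_matpow_tendsto (hd : 0 < d) (R : Matrix (Fin d) (Fin d) ℤ)
    (hRexp : ∀ z ∈ spectrum ℂ (R.map ((↑) : ℤ → ℂ)), 1 < ‖z‖)
    (δ v : Fin d → ℝ) :
    Filter.Tendsto (fun n => δ ⬝ᵥ (((R.map ((↑) : ℤ → ℝ))⁻¹ ^ n).mulVec v)) atTop (𝓝 0) := by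
  have hform : ∀ n, δ ⬝ᵥ (((R.map ((↑) : ℤ → ℝ))⁻¹ ^ n).mulVec v)
      = ∑ i, ∑ j, δ i * (((R.map ((↑) : ℤ → ℝ))⁻¹ ^ n) i j * v j) := by
    intro n
    simp [dotProduct, Matrix.mulVec, Finset.mul_sum]
  simp only [hform]
  have : Filter.Tendsto (fun n => ∑ i, ∑ j, δ i * (((R.map ((↑) : ℤ → ℝ))⁻¹ ^ n) i j * v j))
      atTop (𝓝 (∑ i : Fin d, ∑ j : Fin d, (0:ℝ))) := by
    apply tendsto_finset_sum
    intro i _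
    apply tendsto_finset_sum
    intro j _
    have := ((matpow_entry_tendsto hd R hRexp i j).mul_const (v j)).const_mul (δ i)
    simpa using this
  simpa using this

lemma tendsto_iter_integral (hd : 0 < d) (R : Matrix (Fin d) (Fin d) ℤ)
    (hRexp : ∀ z ∈ spectrum ℂ (R.map ((↑) : ℤ → ℂ)), 1 < ‖z‖)
    (B : Finset (Fin d → ℤ)) (hB : B.Nonempty) (δ : Fin d → ℝ)
    (μ₀ μB : Measure (Fin d → ℝ)) [IsProbabilityMeasure μ₀] [IsProbabilityMeasure μB]
    (hinv : measOp (R.map ((↑) : ℤ → ℝ)) B μB = μB) :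
    Filter.Tendsto (fun n => ∫ x, expFn δ x ∂((measOp (R.map ((↑) : ℤ → ℝ)) B)^[n] μ₀))
      atTop (𝓝 (∫ x, expFn δ x ∂μB)) := by
  set Rr := R.map ((↑) : ℤ → ℝ) with hRr
  have hfix : ∀ n, (measOp Rr B)^[n] μB = μB := fun n => Function.iterate_fixed hinv n
  have hμB : ∀ n, ∫ x, expFn δ x ∂μB = ∫ x, iterH Rr B δ n x ∂μB := by
    intro n
    rw [← integral_iterH Rr B hB δ n μB inferInstance, hfix n]
  have hμ0 : ∀ n, ∫ x, expFn δ x ∂((measOp Rr B)^[n] μ₀) = ∫ x, iterH Rr B δ n x ∂μ₀ :=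
    fun n => integral_iterH Rr B hB δ n μ₀ inferInstance
  -- dominated convergence on the product measure
  haveI : IsProbabilityMeasure (μ₀.prod μB) := by infer_instance
  have hint1 : ∀ n, Integrable (fun p : (Fin d → ℝ) × (Fin d → ℝ) => iterH Rr B δ n p.1) (μ₀.prod μB) :=
    fun n => integrable_of_bdd' ((continuous_iterH Rr B δ n).comp continuous_fst)
      (fun p => norm_iterH_le Rr B hB δ n p.1)
  have hint2 : ∀ n, Integrable (fun p : (Fin d → ℝ) × (Fin d → ℝ) => iterH Rr B δ n p.2) (μ₀.prod μB) :=
    fun n => integrable_of_bdd' ((continuous_iterH Rr B δ n).comp continuous_snd)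
      (fun p => norm_iterH_le Rr B hB δ n p.2)
  have hdom : Filter.Tendsto
      (fun n => ∫ p, (iterH Rr B δ n p.1 - iterH Rr B δ n p.2) ∂(μ₀.prod μB))
      atTop (𝓝 (∫ _p : (Fin d → ℝ) × (Fin d → ℝ), (0:ℂ) ∂(μ₀.prod μB))) := by
    apply tendsto_integral_of_dominated_convergence (bound := fun _ => (2:ℝ))
    · intro n
      exact (((continuous_iterH Rr B δ n).comp continuous_fst).sub
        ((continuous_iterH Rr B δ n).comp continuous_snd)).aestronglyMeasurable
    · exact integrable_const 2
    · intro n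
      apply Filter.Eventually.of_forall
      intro p
      calc ‖iterH Rr B δ n p.1 - iterH Rr B δ n p.2‖
          ≤ ‖iterH Rr B δ n p.1‖ + ‖iterH Rr B δ n p.2‖ := norm_sub_le _ _
        _ ≤ 1 + 1 := add_le_add (norm_iterH_le Rr B hB δ n _) (norm_iterH_le Rr B hB δ n _)
        _ = 2 := by norm_num
    · apply Filter.Eventually.of_forall
      intro p
      rw [tendsto_zero_iff_norm_tendsto_zero]
      apply squeeze_zero (fun n => norm_nonneg _)
        (fun n => iterH_diff_le Rr B hB δ n p.1 p.2)
      have h0 := dot_matpow_tendsto hd R hRexp δ (p.1 - p.2)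
      have := (h0.abs.const_mul (4 * Real.pi))
      simpa using this
  rw [integral_zero] at hdom
  have hsplit : ∀ n, ∫ p, (iterH Rr B δ n p.1 - iterH Rr B δ n p.2) ∂(μ₀.prod μB)
      = (∫ x, iterH Rr B δ n x ∂μ₀) - ∫ y, iterH Rr B δ n y ∂μB := by
    intro n
    rw [integral_sub (hint1 n) (hint2 n)]
    rw [MeasureTheory.integral_fun_fst (f := fun x => iterH Rr B δ n x),
      MeasureTheory.integral_fun_snd (f := fun y => iterH Rr B δ n y)]
    simp [measure_univ]
  simp only [hsplit] at hdom
  -- conclude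
  have : Filter.Tendsto (fun n => ∫ x, iterH Rr B δ n x ∂μ₀) atTop (𝓝 (∫ x, expFn δ x ∂μB)) := by
    have h2 : (fun n => ∫ x, iterH Rr B δ n x ∂μ₀)
        = fun n => ((∫ x, iterH Rr B δ n x ∂μ₀) - ∫ y, iterH Rr B δ n y ∂μB)
            + ∫ x, expFn δ x ∂μB := by
      funext n
      rw [← hμB n]
      ring
    rw [h2]
    simpa using hdom.add_const (∫ x, expFn δ x ∂μB)
  simpa only [hμ0] using this

end Final


theorem orthogonal_of_iterated_spectra {d N : ℕ} (R : Matrix (Fin d) (Fin d) ℤ)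
    (hRexp : ∀ z ∈ spectrum ℂ (R.map ((↑) : ℤ → ℂ)), 1 < ‖z‖)
    (B L : Finset (Fin d → ℤ)) (hBcard : B.card = N) (hLcard : L.card = N) (hN : 2 ≤ N)
    (hH : IsHadamardPair R B L)
    (μ₀ : Measure (Fin d → ℝ)) [IsProbabilityMeasure μ₀]
    (Λ₀ : Set (Fin d → ℝ)) (hΛ₀ : Λ₀ ⊆ PiSet B) (hspec : IsSpectral μ₀ Λ₀)
    (hS : specOp R L Λ₀ ⊆ Λ₀)
    (μB : Measure (Fin d → ℝ)) [IsProbabilityMeasure μB]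
    (hinv : measOp (R.map ((↑) : ℤ → ℝ)) B μB = μB) :
    ∀ l1 ∈ ⋂ n : ℕ, (specOp R L)^[n] Λ₀, ∀ l2 ∈ ⋂ n : ℕ, (specOp R L)^[n] Λ₀,
      l1 ≠ l2 → ∫ x, expFn (l1 - l2) x ∂μB = 0 := by
  intro l1 hl1 l2 hl2 hne
  rcases Nat.eq_zero_or_pos d with hd0 | hd
  · exfalso
    apply hne
    funext i
    exact absurd i.2 (by omega)
  · have hBne : B.Nonempty := Finset.card_pos.mp (by omega)
    have horth : ∀ n : ℕ, ∫ x, expFn (l1 - l2) x ∂((measOp (R.map ((↑) : ℤ → ℝ)) B)^[n] μ₀) = 0 :=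
      fun n => orth_iter R hRexp B L hBcard hN hH μ₀ Λ₀ hΛ₀ hspec hS n
        l1 (Set.mem_iInter.mp hl1 n) l2 (Set.mem_iInter.mp hl2 n) hne
    have hconv := tendsto_iter_integral hd R hRexp B hBne (l1 - l2) μ₀ μB hinv
    simp only [horth] at hconv
    exact tendsto_nhds_unique hconv tendsto_const_nhds
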